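/- Let T > 1 and let λ, μ, ν ∈ ℂ be solutions of w e^{w} = 1 with μ ≠ ν. Set μ̃ = e^{−μ(T−1)}, ν̃ = e^{−ν(T−1)}, and assume μ̃ ≠ ν̃. Let a = 1 + 1/μ, β₁ = −μ̃/((ν̃ − μ̃)·a), β₂ = μ̃·ν̃/((ν̃ − μ̃)·a), and define g : [0,T] → ℂ by g(t) = β₁·(e^{−μ t} − e^{−ν t}) for t ∈ [0,1], plus β₂·(e^{−μ(t−T+1)} − e^{−ν(t−T+1)}) for t ∈ [T−1, T], and 0 elsewhere (the two pieces being added where the intervals overlap). Then ∫₀^T e^{λ t} g(t) dt = 1 if λ = μ, and ∫₀^T e^{λ t} g(t) dt = 0 if λ ≠ μ. -/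

import Mathlib

open Set MeasureTheory

noncomputable section

private lemma exp_cont (c : ℂ) : Continuous (fun t : ℝ => Complex.exp (c * t)) := by
  fun_prop

private lemma Kcont (b lam mu nu : ℂ) :
    Continuous (fun t : ℝ =>
      Complex.exp (lam * t) * (b * (Complex.exp (-(mu * t)) - Complex.exp (-(nu * t))))) := by
  fun_prop

private lemma Kval (b lam mu nu : ℂ) :
    ∫ t in (0:ℝ)..1,
        Complex.exp (lam * t) * (b * (Complex.exp (-(mu * t)) - Complex.exp (-(nu * t))))
      = b * ((∫ t in (0:ℝ)..1, Complex.exp ((lam - mu) * t))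
          - ∫ t in (0:ℝ)..1, Complex.exp ((lam - nu) * t)) := by
  rw [← intervalIntegral.integral_sub ((exp_cont (lam - mu)).intervalIntegrable _ _)
      ((exp_cont (lam - nu)).intervalIntegrable _ _),
    ← intervalIntegral.integral_const_mul]
  apply intervalIntegral.integral_congr
  intro t _
  show Complex.exp (lam * t) * (b * (Complex.exp (-(mu * t)) - Complex.exp (-(nu * t))))
      = b * (Complex.exp ((lam - mu) * t) - Complex.exp ((lam - nu) * t))
  rw [show (lam - mu) * (t:ℂ) = lam * t + -(mu * t) by ring,
    show (lam - nu) * (t:ℂ) = lam * t + -(nu * t) by ring,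
    Complex.exp_add, Complex.exp_add]
  ring

private lemma Jval {c : ℂ} (hc : c ≠ 0) :
    ∫ t in (0:ℝ)..1, Complex.exp (c * t) = (Complex.exp c - 1) / c := by
  rw [integral_exp_mul_complex hc]
  norm_num

private lemma Jzero : ∫ t in (0:ℝ)..1, Complex.exp ((0:ℂ) * t) = 1 := by
  simp

theorem stmt6 (T : ℝ) (hT : 1 < T)
    (lam mu nu : ℂ)
    (hlam : lam * Complex.exp lam = 1)
    (hmu : mu * Complex.exp mu = 1)
    (hnu : nu * Complex.exp nu = 1)
    (hmunu : mu ≠ nu)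
    (mtld ntld : ℂ)
    (hmut : mtld = Complex.exp (-(mu * (T - 1))))
    (hnut : ntld = Complex.exp (-(nu * (T - 1))))
    (hmutnut : mtld ≠ ntld)
    (a : ℂ) (ha : a = 1 + 1 / mu)
    (b1 b2 : ℂ)
    (hb1 : b1 = -mtld / ((ntld - mtld) * a))
    (hb2 : b2 = mtld * ntld / ((ntld - mtld) * a))
    (g : ℝ → ℂ)
    (hg : ∀ t : ℝ, g t =
      (if t ∈ Icc (0:ℝ) 1 then b1 * (Complex.exp (-(mu * t)) - Complex.exp (-(nu * t))) else 0)
      + (if t ∈ Icc (T - 1) T then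
          b2 * (Complex.exp (-(mu * (t - T + 1))) - Complex.exp (-(nu * (t - T + 1)))) else 0)) :
    (lam = mu → ∫ t in (0:ℝ)..T, Complex.exp (lam * t) * g t = 1) ∧
    (lam ≠ mu → ∫ t in (0:ℝ)..T, Complex.exp (lam * t) * g t = 0) := by
  -- basic nonvanishing facts
  have hlam0 : lam ≠ 0 := by rintro rfl; simp at hlam
  have hmu0 : mu ≠ 0 := by rintro rfl; simp at hmu
  have hnu0 : nu ≠ 0 := by rintro rfl; simp at hnu
  have hElam : Complex.exp lam = lam⁻¹ :=
    eq_inv_of_mul_eq_one_left (by rw [mul_comm]; exact hlam)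
  have hEmu : Complex.exp mu = mu⁻¹ :=
    eq_inv_of_mul_eq_one_left (by rw [mul_comm]; exact hmu)
  have hEnu : Complex.exp nu = nu⁻¹ :=
    eq_inv_of_mul_eq_one_left (by rw [mul_comm]; exact hnu)
  have hmuneg : mu ≠ -1 := by
    rintro rfl
    have h1 : Complex.exp (-1) = -1 := by linear_combination -hmu
    have h2 : Complex.exp ((-1 : ℝ) : ℂ) = ((Real.exp (-1) : ℝ) : ℂ) :=
      (Complex.ofReal_exp (-1)).symm
    have h3 : ((Real.exp (-1) : ℝ) : ℂ) = ((-1 : ℝ) : ℂ) := by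
      rw [← h2]; push_cast; exact h1
    have h4 : Real.exp (-1) = -1 := by exact_mod_cast h3
    have := Real.exp_pos (-1)
    linarith
  have ha0 : a ≠ 0 := by
    rw [ha]
    intro h
    apply hmuneg
    field_simp at h
    linear_combination h
  have hmt0 : mtld ≠ 0 := by rw [hmut]; exact Complex.exp_ne_zero _
  have hnt0 : ntld ≠ 0 := by rw [hnut]; exact Complex.exp_ne_zero _
  have hnm0 : ntld - mtld ≠ 0 := sub_ne_zero.2 (Ne.symm hmutnut)
  -- the two pieces
  set h1 : ℝ → ℂ := fun t =>
    Complex.exp (lam * t) * (b1 * (Complex.exp (-(mu * t)) - Complex.exp (-(nu * t)))) with hh1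
  set h2 : ℝ → ℂ := fun t =>
    Complex.exp (lam * t) *
      (b2 * (Complex.exp (-(mu * (t - T + 1))) - Complex.exp (-(nu * (t - T + 1))))) with hh2
  have hc1 : Continuous h1 := Kcont _ _ _ _
  have hc2 : Continuous h2 := by rw [hh2]; fun_prop
  -- rewrite the integrand as a sum of indicators
  have hrep : ∀ t : ℝ, Complex.exp (lam * t) * g t
      = (Icc (0:ℝ) 1).indicator h1 t + (Icc (T - 1) T).indicator h2 t := by
    intro t
    rw [hg t, mul_add, Set.indicator_apply, Set.indicator_apply]
    simp only [mul_ite, mul_zero]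
    rfl
  have hint1 : Integrable ((Icc (0:ℝ) 1).indicator h1) :=
    (hc1.integrableOn_Icc).integrable_indicator measurableSet_Icc
  have hint2 : Integrable ((Icc (T - 1) T).indicator h2) :=
    (hc2.integrableOn_Icc).integrable_indicator measurableSet_Icc
  have hT0 : (0:ℝ) ≤ T := by linarith
  -- compute the main integral as the sum of two interval integrals
  have key : (∫ t in (0:ℝ)..T, Complex.exp (lam * t) * g t)
      = (∫ t in (0:ℝ)..1, h1 t) + ∫ t in (T - 1)..T, h2 t := by
    have e1 : (∫ t in (0:ℝ)..T, (Icc (0:ℝ) 1).indicator h1 t) = ∫ t in (0:ℝ)..1, h1 t := by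
      rw [intervalIntegral.integral_of_le hT0, setIntegral_indicator measurableSet_Icc,
        show Ioc (0:ℝ) T ∩ Icc 0 1 = Ioc 0 1 by
          ext x
          simp only [mem_inter_iff, mem_Ioc, mem_Icc]
          constructor
          · rintro ⟨⟨hx1, _⟩, _, hx4⟩; exact ⟨hx1, hx4⟩
          · rintro ⟨hx1, hx2⟩; exact ⟨⟨hx1, by linarith⟩, le_of_lt hx1, hx2⟩,
        ← intervalIntegral.integral_of_le (zero_le_one)]
    have e2 : (∫ t in (0:ℝ)..T, (Icc (T - 1) T).indicator h2 t) = ∫ t in (T - 1)..T, h2 t := by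
      rw [intervalIntegral.integral_of_le hT0, setIntegral_indicator measurableSet_Icc,
        show Ioc (0:ℝ) T ∩ Icc (T - 1) T = Icc (T - 1) T by
          ext x
          simp only [mem_inter_iff, mem_Ioc, mem_Icc]
          constructor
          · rintro ⟨_, hx3, hx4⟩; exact ⟨hx3, hx4⟩
          · rintro ⟨hx1, hx2⟩; exact ⟨⟨by linarith, hx2⟩, hx1, hx2⟩,
        integral_Icc_eq_integral_Ioc,
        ← intervalIntegral.integral_of_le (by linarith : T - 1 ≤ T)]
    calc (∫ t in (0:ℝ)..T, Complex.exp (lam * t) * g t)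
        = ∫ t in (0:ℝ)..T,
            ((Icc (0:ℝ) 1).indicator h1 t + (Icc (T - 1) T).indicator h2 t) := by
          exact intervalIntegral.integral_congr fun t _ => hrep t
      _ = (∫ t in (0:ℝ)..T, (Icc (0:ℝ) 1).indicator h1 t)
            + ∫ t in (0:ℝ)..T, (Icc (T - 1) T).indicator h2 t :=
          intervalIntegral.integral_add hint1.intervalIntegrable hint2.intervalIntegrable
      _ = (∫ t in (0:ℝ)..1, h1 t) + ∫ t in (T - 1)..T, h2 t := by rw [e1, e2]
  -- shift the second integral to [0,1]
  have shift : (∫ t in (T - 1)..T, h2 t)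
      = Complex.exp (lam * ((T:ℂ) - 1)) *
          ∫ t in (0:ℝ)..1,
            Complex.exp (lam * t) * (b2 * (Complex.exp (-(mu * t)) - Complex.exp (-(nu * t)))) := by
    rw [← intervalIntegral.integral_const_mul]
    have heq := intervalIntegral.integral_comp_add_right (a := (0:ℝ)) (b := (1:ℝ)) h2 (T - 1)
    rw [show (0:ℝ) + (T - 1) = T - 1 by ring, show (1:ℝ) + (T - 1) = T by ring] at heq
    rw [← heq]
    apply intervalIntegral.integral_congr
    intro t _
    simp only [hh2]
    have harg : ((t + (T - 1) : ℝ) : ℂ) - (T:ℂ) + 1 = (t:ℂ) := by push_cast; ring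
    have harg2 : lam * ((t + (T - 1) : ℝ) : ℂ) = lam * ((T:ℂ) - 1) + lam * (t:ℂ) := by
      push_cast; ring
    rw [harg, harg2, Complex.exp_add]
    ring
  rw [key, shift, hh1, Kval, Kval]
  constructor
  · intro hl
    subst hl
    have hlnne : lam - nu ≠ 0 := sub_ne_zero.2 hmunu
    have hXm : Complex.exp (lam * ((T:ℂ) - 1)) = mtld⁻¹ := by
      rw [hmut, ← Complex.exp_neg]
      push_cast
      ring_nf
    have hcoef : (b1 + mtld⁻¹ * b2) * a = 1 := by
      rw [hb1, hb2]
      field_simp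
      ring
    have hE : (1 : ℂ) - (lam⁻¹ * nu - 1) / (lam - nu) = a := by
      rw [ha]
      field_simp
      ring
    rw [hXm, show lam - lam = 0 from sub_self lam, Jzero,
      Jval hlnne,
      show Complex.exp (lam - nu) = lam⁻¹ * nu by
        rw [Complex.exp_sub, hElam, hEnu]; field_simp]
    linear_combination (b1 + mtld⁻¹ * b2) * hE + hcoef
  · intro hlm
    have hlmne : lam - mu ≠ 0 := sub_ne_zero.2 hlm
    by_cases hln : lam = nu
    · subst hln
      have hXn : Complex.exp (lam * ((T:ℂ) - 1)) = ntld⁻¹ := by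
        rw [hnut, ← Complex.exp_neg]
        push_cast
        ring_nf
      have hcoef : b1 + ntld⁻¹ * b2 = 0 := by
        rw [hb1, hb2]
        field_simp
        ring
      rw [hXn, show lam - lam = 0 from sub_self lam, Jzero,
        Jval hlmne,
        show Complex.exp (lam - mu) = lam⁻¹ * mu by
          rw [Complex.exp_sub, hElam, hEmu]; field_simp]
      linear_combination ((lam⁻¹ * mu - 1) / (lam - mu) - 1) * hcoef
    · have hlnne : lam - nu ≠ 0 := sub_ne_zero.2 hln
      rw [Jval hlmne, Jval hlnne,
        show Complex.exp (lam - mu) = lam⁻¹ * mu by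
          rw [Complex.exp_sub, hElam, hEmu]; field_simp,
        show Complex.exp (lam - nu) = lam⁻¹ * nu by
          rw [Complex.exp_sub, hElam, hEnu]; field_simp]
      have hval : (lam⁻¹ * mu - 1) / (lam - mu) - (lam⁻¹ * nu - 1) / (lam - nu) = 0 := by
        rw [div_sub_div _ _ hlmne hlnne, div_eq_zero_iff]
        left
        field_simp
        ring
      rw [hval, mul_zero, mul_zero, mul_zero, add_zero]
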